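/- arXiv:2105.03335 — 2 statements merged into one kernel-verified Lean document; each statement's English description precedes it below -/
import Mathlib

section
/- Let G(μ,ν,h) be the numbering defined by G(μ,ν,h)⟨n,x⟩ = ν(n) if the universal h-computable partial function κ̃^h(x) diverges and = μ(κ̃^h(x)) if it converges. Then μ ≤ G(μ,ν,h), ν ≤ G(μ,ν,h), and G(μ,ν,h) ≤^{h'} μ ⊕ ν, where h' is the jump of h. -/
/-- Relativized partial recursiveness: `f` is partial recursive in the (total) oracle `O`. -/
inductive OracleRecursiveIn (O : ℕ → ℕ) : (ℕ →. ℕ) → Prop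
  | oracle : OracleRecursiveIn O O
  | zero : OracleRecursiveIn O (pure 0)
  | succ : OracleRecursiveIn O Nat.succ
  | left : OracleRecursiveIn O ↑fun n : ℕ => n.unpair.1
  | right : OracleRecursiveIn O ↑fun n : ℕ => n.unpair.2
  | pair {f g} : OracleRecursiveIn O f → OracleRecursiveIn O g →
      OracleRecursiveIn O fun n => Nat.pair <$> f n <*> g n
  | comp {f g} : OracleRecursiveIn O f → OracleRecursiveIn O g → OracleRecursiveIn O fun n => g n >>= f
  | prec {f g} : OracleRecursiveIn O f → OracleRecursiveIn O g → OracleRecursiveIn O (Nat.unpaired fun a n =>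
      n.rec (f a) fun y IH => do let i ← IH; g (Nat.pair a (Nat.pair y i)))
  | rfind {f} : OracleRecursiveIn O f →
      OracleRecursiveIn O fun a => Nat.rfind fun n => (fun m => m = 0) <$> f (Nat.pair a n)

/-- Computable (many-one style) reducibility between numberings. -/
def NumRed {S : Type*} (μ ν : ℕ → S) : Prop :=
  ∃ f : ℕ → ℕ, Computable f ∧ ∀ n, μ n = ν (f n)

/-- Reducibility between numberings via an `O`-computable total function. -/
def NumRedIn {S : Type*} (O : ℕ → ℕ) (μ ν : ℕ → S) : Prop :=
  ∃ f : ℕ → ℕ, OracleRecursiveIn O ↑f ∧ ∀ n, μ n = ν (f n)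

/-- The join `μ ⊕ ν` of two numberings. -/
def NumJoin {S : Type*} (μ ν : ℕ → S) : ℕ → S :=
  fun n => if n % 2 = 0 then μ (n / 2) else ν (n / 2)

/-- `ν` is `O`-precomplete: every `O`-partial computable function has a total
computable `ν`-totalizer. -/
def Precomplete {S : Type*} (O : ℕ → ℕ) (ν : ℕ → S) : Prop :=
  ∀ ψ : ℕ →. ℕ, OracleRecursiveIn O ψ →
    ∃ t : ℕ → ℕ, Computable t ∧ ∀ (x : ℕ) (hx : (ψ x).Dom), ν (t x) = ν ((ψ x).get hx)

/-- `ν` is `O`-complete with respect to `a`. -/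
def CompleteAt {S : Type*} (O : ℕ → ℕ) (ν : ℕ → S) (a : S) : Prop :=
  ∀ ψ : ℕ →. ℕ, OracleRecursiveIn O ψ →
    ∃ t : ℕ → ℕ, Computable t ∧ (∀ (x : ℕ) (hx : (ψ x).Dom), ν (t x) = ν ((ψ x).get hx)) ∧
      ∀ x : ℕ, ¬ (ψ x).Dom → ν (t x) = a

open Classical in
/-- The jump (halting problem) of a partial function `U`, as a 0-1 valued total function. -/
noncomputable def jumpOf (U : ℕ →. ℕ) : ℕ → ℕ :=
  fun x => if (U x).Dom then 1 else 0

open Classical in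
/-- The operation `G(μ,ν,h)` defined from a universal `h`-partial computable function `U`:
`G⟨n,x⟩ = ν n` if `U x` diverges and `μ (U x)` if it converges. -/
noncomputable def GOp {S : Type*} (μ ν : ℕ → S) (U : ℕ →. ℕ) : ℕ → S :=
  fun m =>
    if hd : (U (Nat.unpair m).2).Dom then μ ((U (Nat.unpair m).2).get hd)
    else ν (Nat.unpair m).1

section Aux

theorem partrec_recIn {O : ℕ → ℕ} {f : ℕ →. ℕ} (hf : Nat.Partrec f) : OracleRecursiveIn O f := by
  induction hf with
  | zero => exact .zero
  | succ => exact .succ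
  | left => exact .left
  | right => exact .right
  | pair _ _ ih1 ih2 => exact .pair ih1 ih2
  | comp _ _ ih1 ih2 => exact .comp ih1 ih2
  | prec _ _ ih1 ih2 => exact .prec ih1 ih2
  | rfind _ ih => exact .rfind ih

theorem computable_recIn {O : ℕ → ℕ} {f : ℕ → ℕ} (hf : Computable f) :
    OracleRecursiveIn O ↑f := partrec_recIn (Partrec.nat_iff.1 hf)

theorem recIn_trans {O O' : ℕ → ℕ} {f : ℕ →. ℕ} (hf : OracleRecursiveIn O f)
    (hO : OracleRecursiveIn O' ↑O) : OracleRecursiveIn O' f := by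
  induction hf with
  | oracle => exact hO
  | zero => exact .zero
  | succ => exact .succ
  | left => exact .left
  | right => exact .right
  | pair _ _ ih1 ih2 => exact .pair ih1 ih2
  | comp _ _ ih1 ih2 => exact .comp ih1 ih2
  | prec _ _ ih1 ih2 => exact .prec ih1 ih2
  | rfind _ ih => exact .rfind ih

end Aux

/-- `μ ≤ G(μ,ν,h)`, `ν ≤ G(μ,ν,h)`, and `G(μ,ν,h) ≤^{h'} μ ⊕ ν`,
where `U` is the universal `h`-partial computable function (characterized by the
hypotheses) and `h' = jumpOf U` is the jump of `h`. -/
theorem GOp_between {S : Type*} (h : ℕ → ℕ) (U : ℕ →. ℕ)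
    (hU : OracleRecursiveIn h U)
    (huniv : ∀ ψ : ℕ →. ℕ, OracleRecursiveIn h ψ → ∃ e : ℕ, ∀ x, ψ x = U (Nat.pair e x))
    (hh : OracleRecursiveIn (jumpOf U) ↑h)
    (μ ν : ℕ → S) :
    NumRed μ (GOp μ ν U) ∧ NumRed ν (GOp μ ν U) ∧
      NumRedIn (jumpOf U) (GOp μ ν U) (NumJoin μ ν) := by
  refine ⟨?_, ?_, ?_⟩
  · -- μ ≤ G
    obtain ⟨e, he⟩ := huniv ↑(fun n : ℕ => n) (computable_recIn Computable.id)
    refine ⟨fun n => Nat.pair 0 (Nat.pair e n), by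
      exact Primrec.to_comp (Primrec₂.natPair.comp (Primrec.const 0) (Primrec₂.natPair.comp (Primrec.const e) Primrec.id)),
      fun n => ?_⟩
    have hx : U (Nat.pair e n) = Part.some n := (he n).symm
    have hd : (U (Nat.pair (0:ℕ) (Nat.pair e n)).unpair.2).Dom := by
      simp [Nat.unpair_pair, hx]
    simp only [GOp, Nat.unpair_pair]
    rw [dif_pos (by simp [hx])]
    congr 1
    simp [hx]
  · -- ν ≤ G
    obtain ⟨e, he⟩ := huniv (fun _ => Part.none) (partrec_recIn Nat.Partrec.none)
    refine ⟨fun n => Nat.pair n (Nat.pair e 0), by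
      exact Primrec.to_comp (Primrec₂.natPair.comp Primrec.id (Primrec.const _)),
      fun n => ?_⟩
    have hx : U (Nat.pair e 0) = Part.none := (he 0).symm
    simp only [GOp, Nat.unpair_pair]
    rw [dif_neg (by simp [hx])]
  · -- G ≤^{h'} μ ⊕ ν
    classical
    set J := jumpOf U with hJ
    have hUJ : OracleRecursiveIn J U := recIn_trans hU hh
    -- base : a ↦ 2*a.unpair.1+1
    have hbase : OracleRecursiveIn J ↑(fun a : ℕ => 2 * a.unpair.1 + 1) :=
      computable_recIn (Primrec.to_comp (Primrec.succ.comp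
        (Primrec.nat_mul.comp (Primrec.const 2) (Primrec.fst.comp Primrec.unpair))))
    have hc1 : OracleRecursiveIn J ↑(fun k : ℕ => k.unpair.1.unpair.2) :=
      computable_recIn (Primrec.to_comp
        (Primrec.snd.comp (Primrec.unpair.comp (Primrec.fst.comp Primrec.unpair))))
    have hdbl : OracleRecursiveIn J ↑(fun v : ℕ => 2 * v) :=
      computable_recIn (Primrec.to_comp (Primrec.nat_mul.comp (Primrec.const 2) Primrec.id))
    have hstep : OracleRecursiveIn J fun k =>
        ((↑(fun k : ℕ => k.unpair.1.unpair.2) : ℕ →. ℕ) k >>= U) >>= (↑(fun v : ℕ => 2 * v) : ℕ →. ℕ) :=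
      .comp hdbl (.comp hUJ hc1)
    have hP := OracleRecursiveIn.prec hbase hstep
    have hid : OracleRecursiveIn J ↑(fun n : ℕ => n) := computable_recIn Computable.id
    have hJ2 : OracleRecursiveIn J fun n =>
        (↑(fun n : ℕ => n.unpair.2) : ℕ →. ℕ) n >>= (↑J : ℕ →. ℕ) := .comp .oracle .right
    have hpairfun := OracleRecursiveIn.pair hid hJ2
    have hψ := OracleRecursiveIn.comp hP hpairfun
    -- the total reduction function
    refine ⟨fun m => if hd : (U m.unpair.2).Dom then 2 * (U m.unpair.2).get hd
        else 2 * m.unpair.1 + 1, ?_, ?_⟩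
    · refine (congrArg (OracleRecursiveIn J) ?_).mpr hψ
      funext m
      change Part.some _ = (((Part.some m).map Nat.pair).bind fun g =>
        ((Part.some m.unpair.2).bind fun x => Part.some (J x)).map g).bind
        (Nat.unpaired fun a n => Nat.rec (Part.some (2 * a.unpair.1 + 1)) (fun y IH => IH.bind fun i =>
          ((Part.some (Nat.pair a (Nat.pair y i)).unpair.1.unpair.2).bind U).bind fun v => Part.some (2 * v)) n)
      simp only [PFun.coe_val, Part.bind_some, Nat.unpaired, Part.bind_eq_bind,
        Seq.seq, Part.map_eq_map, Part.map_some, Nat.unpair_pair]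
      by_cases hd : (U m.unpair.2).Dom
      · have hj : J m.unpair.2 = 1 := by simp [hJ, jumpOf, hd]
        rw [hj, dif_pos hd]
        rw [Part.bind_some (f := U)]
        show Part.some _ = (Part.some (2 * (Nat.unpair m).1 + 1)).bind fun _ =>
          (U (Nat.unpair m).2).bind ((↑(fun v : ℕ => 2 * v) : ℕ →. ℕ))
        rw [Part.bind_some]
        conv_rhs => rw [← Part.some_get hd, Part.bind_some (f := ((↑(fun v : ℕ => 2 * v) : ℕ →. ℕ)))]
        rfl
      · have hj : J m.unpair.2 = 0 := by simp [hJ, jumpOf, hd]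
        rw [hj, dif_neg hd]
        rfl
    · intro m
      by_cases hd : (U m.unpair.2).Dom
      · simp only [GOp, NumJoin, dif_pos hd]
        rw [if_pos (by omega)]
        congr 1
        omega
      · simp only [GOp, NumJoin, dif_neg hd]
        rw [if_neg (by omega)]
        congr 1
        omega
end

section
/- If the numbering ν is h-complete with respect to some s ∈ S, then G(μ,ν,h) is also h-complete with respect to s. -/
open Classical in
lemma GOp_pair {S : Type*} (μ ν : ℕ → S) (U : ℕ →. ℕ) (a b : ℕ) :
    GOp μ ν U (Nat.pair a b) = if hd : (U b).Dom then μ ((U b).get hd) else ν a := by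
  simp [GOp]

/-- if `ν` is `h`-complete w.r.t. `s ∈ rng ν`, then so is `G(μ,ν,h)`,
where `U` is the universal `h`-partial computable function. -/
theorem GOp_complete {S : Type*} (h : ℕ → ℕ) (U : ℕ →. ℕ)
    (hU : OracleRecursiveIn h U)
    (huniv : ∀ ψ : ℕ →. ℕ, OracleRecursiveIn h ψ → ∃ e : ℕ, ∀ x, ψ x = U (Nat.pair e x))
    (μ ν : ℕ → S) (s : S) (hs : ∃ n, ν n = s)
    (hc : CompleteAt h ν s) :
    CompleteAt h (GOp μ ν U) s := by
  intro ψ hψ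
  have hψ1 : OracleRecursiveIn h (fun x => ψ x >>= (↑fun y : ℕ => y.unpair.1 : ℕ →. ℕ)) :=
    OracleRecursiveIn.comp OracleRecursiveIn.left hψ
  have hθ : OracleRecursiveIn h (fun x => ψ x >>= fun y =>
      ((↑fun y : ℕ => y.unpair.2 : ℕ →. ℕ) y) >>= U) :=
    OracleRecursiveIn.comp (OracleRecursiveIn.comp hU OracleRecursiveIn.right) hψ
  obtain ⟨e, he⟩ := huniv _ hθ
  obtain ⟨t₁, ht₁c, ht₁, ht₁d⟩ := hc _ hψ1
  have hUe : ∀ x, U (Nat.pair e x) = ψ x >>= fun y => U y.unpair.2 := by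
    intro x
    rw [← he x]
    simp [Part.bind_assoc, Part.bind_eq_bind, Part.bind_some]
    congr 1
    funext y
    exact Part.bind_some _ _
  refine ⟨fun x => Nat.pair (t₁ x) (Nat.pair e x),
    Primrec₂.natPair.to_comp.comp ht₁c
      (Primrec₂.natPair.to_comp.comp (Computable.const e) Computable.id), ?_, ?_⟩
  · intro x hx
    set y := (ψ x).get hx with hy
    have hval : U (Nat.pair e x) = U y.unpair.2 := by
      rw [hUe x, Part.bind_eq_bind, ← Part.some_get hx, Part.bind_some]
    by_cases hd : (U y.unpair.2).Dom
    · have hd' : (U (Nat.pair e x)).Dom := by rw [hval]; exact hd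
      rw [GOp_pair]
      simp only [GOp]
      rw [dif_pos hd', dif_pos hd]
      congr 1
      exact Part.get_eq_get_of_eq _ _ hval
    · have hd' : ¬ (U (Nat.pair e x)).Dom := by rw [hval]; exact hd
      rw [GOp_pair]
      simp only [GOp]
      rw [dif_neg hd', dif_neg hd]
      have hx1 : ((fun x => ψ x >>= (↑fun y : ℕ => y.unpair.1 : ℕ →. ℕ)) x).Dom := by
        simp only [Part.bind_eq_bind, Part.bind_dom]
        exact ⟨hx, trivial⟩
      have := ht₁ x hx1
      rw [this]
      congr 1
  · intro x hx
    have hd' : ¬ (U (Nat.pair e x)).Dom := by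
      rw [hUe x]
      simp only [Part.bind_eq_bind, Part.bind_dom]
      rintro ⟨hdom, -⟩
      exact hx hdom
    rw [GOp_pair, dif_neg hd']
    apply ht₁d
    show ¬ ((ψ x).bind (↑fun y : ℕ => y.unpair.1 : ℕ →. ℕ)).Dom
    rintro ⟨hdom, -⟩
    exact hx hdom
end
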